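/- Suppose F_{N,m} is the generalized sampling reconstruction with quasi-optimality constant θ (i.e., ‖f − F_{N,m}(f)‖ ≤ θ‖f − Q_N f‖) where N = Ψ(m) ≥ a·m for some a > 0, and suppose f ∈ H satisfies c₁(f) n^{−α} ≤ ‖f − Q_n f‖ ≤ c₂(f) n^{−α} for all n with constants c₁(f), c₂(f), α > 0. Then for any sequence of maps G_m with G_m(f) ∈ T_{Ψ_f(m)} where Ψ_f(m) ≤ c·m, there is a constant C(f,θ,a,c) such that ‖f − F_{Ψ(m),m}(f)‖ ≤ C ‖f − G_m(f)‖ for all m, since ‖f − G_m(f)‖ ≥ ‖f − Q_{Ψ_f(m)} f‖. -/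

import Mathlib

open Submodule

variable {H : Type*}

theorem stmt16 [NormedAddCommGroup H] [InnerProductSpace ℂ H] [CompleteSpace H]
    (T : ℕ → Submodule ℂ H) [∀ n, FiniteDimensional ℂ (T n)]
    (f : H) (θ a c α cf1 cf2 : ℝ)
    (hθ : 0 < θ) (ha : 0 < a) (hc : 0 < c) (hα : 0 < α) (hcf1 : 0 < cf1) (hcf2 : 0 < cf2)
    (Ψ Ψf : ℕ → ℕ) (F G : ℕ → H)
    (hΨ : ∀ m : ℕ, a * (m : ℝ) ≤ (Ψ m : ℝ)) (hΨ1 : ∀ m, 1 ≤ Ψ m)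
    (hΨf : ∀ m : ℕ, (Ψf m : ℝ) ≤ c * (m : ℝ)) (hΨf1 : ∀ m, 1 ≤ Ψf m)
    (hF : ∀ m, ‖f - F m‖ ≤ θ * ‖f - (orthogonalProjection (T (Ψ m)) f : H)‖)
    (hG : ∀ m, G m ∈ T (Ψf m))
    (hdecay : ∀ n : ℕ, 1 ≤ n →
      cf1 * (n : ℝ) ^ (-α) ≤ ‖f - (orthogonalProjection (T n) f : H)‖ ∧
      ‖f - (orthogonalProjection (T n) f : H)‖ ≤ cf2 * (n : ℝ) ^ (-α)) :
    ∃ C : ℝ, 0 < C ∧ ∀ m : ℕ, 1 ≤ m → ‖f - F m‖ ≤ C * ‖f - G m‖ := by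
  refine ⟨θ * cf2 / cf1 * (c / a) ^ α, by positivity, fun m hm => ?_⟩
  have hm0 : (0 : ℝ) < m := by exact_mod_cast hm
  -- lower bound for ‖f - G m‖
  have hQle : ‖f - (orthogonalProjection (T (Ψf m)) f : H)‖ ≤ ‖f - G m‖ := by
    rw [← starProjection_apply, starProjection_minimal]
    exact ciInf_le ⟨0, fun x ⟨y, hy⟩ => hy ▸ norm_nonneg _⟩ (⟨G m, hG m⟩ : T (Ψf m))
  have h1 : (0 : ℝ) < Ψf m := by exact_mod_cast hΨf1 m
  have hlow : cf1 * (c * m) ^ (-α) ≤ ‖f - G m‖ := by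
    refine le_trans ?_ (le_trans (hdecay (Ψf m) (hΨf1 m)).1 hQle)
    have := Real.rpow_le_rpow_of_nonpos h1 (hΨf m) (neg_nonpos.mpr hα.le)
    nlinarith
  -- upper bound for ‖f - F m‖
  have hup : ‖f - F m‖ ≤ θ * (cf2 * (a * m) ^ (-α)) := by
    refine le_trans (hF m) (mul_le_mul_of_nonneg_left ?_ hθ.le)
    have h2 : (0 : ℝ) < a * m := by positivity
    calc ‖f - (orthogonalProjection (T (Ψ m)) f : H)‖
        ≤ cf2 * (Ψ m : ℝ) ^ (-α) := (hdecay (Ψ m) (hΨ1 m)).2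
      _ ≤ cf2 * (a * m) ^ (-α) :=
          mul_le_mul_of_nonneg_left
            (Real.rpow_le_rpow_of_nonpos h2 (hΨ m) (neg_nonpos.mpr hα.le)) hcf2.le
  refine le_trans hup ?_
  have key : θ * (cf2 * (a * m) ^ (-α)) =
      θ * cf2 / cf1 * (c / a) ^ α * (cf1 * (c * m) ^ (-α)) := by
    rw [Real.rpow_neg (by positivity), Real.rpow_neg (by positivity),
      Real.mul_rpow ha.le hm0.le, Real.mul_rpow hc.le hm0.le, Real.div_rpow hc.le ha.le]
    field_simp
  rw [key]
  exact mul_le_mul_of_nonneg_left hlow (by positivity)
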